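/- Let L be a finitely generated Lie algebra of subexponential growth over a field F of characteristic 0. Then the universal enveloping algebra U(L) has subexponential growth; that is, if W_m denotes the span of products of at most m generators of L inside U(L), then dim W_m grows subexponentially in m. -/

import Mathlib

open Filter

attribute [-instance] Sigma.instLE_mathlib Sigma.instLT_mathlib Sigma.preorder Sigma.instPartialOrder

/-- `growthSpace X n` is the span of all (left-normed) brackets of length at most `n` in the
generating set `X`; these spans compute the growth of the Lie algebra generated by `X`. -/
def growthSpace {F : Type} [Field F] {L : Type} [LieRing L] [LieAlgebra F L]
    (X : Set L) : ℕ → Submodule F L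
  | 0 => ⊥
  | 1 => Submodule.span F X
  | (n + 2) => growthSpace X (n + 1) ⊔
      Submodule.span F {z | ∃ x ∈ X, ∃ y ∈ growthSpace (F := F) X (n + 1), z = ⁅x, y⁆}

/-- `ueaFiltration X m` is the span, inside `U(L)`, of all products of at most `m` generators
from `X`. -/
noncomputable def ueaFiltration {F : Type} [Field F] {L : Type} [LieRing L] [LieAlgebra F L]
    (X : Set L) : ℕ → Submodule F (UniversalEnvelopingAlgebra F L)
  | 0 => Submodule.span F {1}
  | (m + 1) => ueaFiltration X m ⊔
      Submodule.span F {z | ∃ x ∈ X, ∃ w ∈ ueaFiltration (F := F) X m,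
        z = UniversalEnvelopingAlgebra.ι F x * w}

section GS
variable {F : Type} [Field F] {L : Type} [LieRing L] [LieAlgebra F L] (X : Set L)

lemma growthSpace_le_succ (n : ℕ) : growthSpace (F := F) X n ≤ growthSpace X (n+1) := by
  match n with
  | 0 => simp [growthSpace]
  | (n+1) => exact le_sup_left

lemma growthSpace_mono : Monotone (growthSpace (F := F) X) :=
  monotone_nat_of_le_succ (growthSpace_le_succ X)

lemma lie_X_mem {x : L} (hx : x ∈ X) {j : ℕ} {y : L} (hy : y ∈ growthSpace (F := F) X j) :
    ⁅x, y⁆ ∈ growthSpace (F := F) X (j + 1) := by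
  match j with
  | 0 => simp only [growthSpace, Submodule.mem_bot] at hy; simp [hy]
  | (j+1) =>
    exact Submodule.mem_sup_right (Submodule.subset_span ⟨x, hx, y, hy, rfl⟩)

lemma lie_mem_growthSpace : ∀ (i : ℕ) {j : ℕ} {x y : L}, x ∈ growthSpace (F := F) X i →
    y ∈ growthSpace (F := F) X j → ⁅x, y⁆ ∈ growthSpace (F := F) X (i + j) := by
  intro i
  induction i with
  | zero => intro j x y hx hy; simp only [growthSpace, Submodule.mem_bot] at hx; simp [hx]
  | succ i ih =>
    intro j x y hx hy
    cases i with
    | zero =>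
      rw [show growthSpace (F := F) X 1 = Submodule.span F X from rfl] at hx
      induction hx using Submodule.span_induction with
      | mem z hz => rw [add_comm]; exact lie_X_mem X hz hy
      | zero => simp
      | add a b _ _ ha hb => rw [add_lie]; exact add_mem ha hb
      | smul c a _ ha => rw [smul_lie]; exact Submodule.smul_mem _ _ ha
    | succ i =>
      rw [show growthSpace (F := F) X (i+2) = growthSpace X (i + 1) ⊔
          Submodule.span F {z | ∃ x ∈ X, ∃ y ∈ growthSpace (F := F) X (i + 1), z = ⁅x, y⁆}
          from rfl] at hx
      rcases Submodule.mem_sup.mp hx with ⟨a, ha, c, hc, rfl⟩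
      rw [add_lie]
      refine add_mem (growthSpace_mono X (by omega) (ih ha hy)) ?_
      clear hx ha
      induction hc using Submodule.span_induction with
      | mem z hz =>
        obtain ⟨u, hu, v, hv, rfl⟩ := hz
        have jac : ⁅⁅u, v⁆, y⁆ = ⁅u, ⁅v, y⁆⁆ - ⁅v, ⁅u, y⁆⁆ := by
          exact lie_lie u v y
        rw [jac]
        refine sub_mem ?_ ?_
        · exact growthSpace_mono X (by omega) (lie_X_mem X hu (ih hv hy))
        · exact growthSpace_mono X (by omega) (ih hv (lie_X_mem X hu hy))
      | zero => simp
      | add a b _ _ ha hb => rw [add_lie]; exact add_mem ha hb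
      | smul c a _ ha => rw [smul_lie]; exact Submodule.smul_mem _ _ ha
lemma growthSpace_fd (hX : X.Finite) : ∀ n, FiniteDimensional F (growthSpace (F := F) X n) := by
  intro n
  induction n with
  | zero => rw [show growthSpace (F := F) X 0 = ⊥ from rfl]; infer_instance
  | succ n ih =>
    cases n with
    | zero =>
      rw [show growthSpace (F := F) X 1 = Submodule.span F X from rfl]
      exact FiniteDimensional.span_of_finite F hX
    | succ n =>
      rw [show growthSpace (F := F) X (n+2) = growthSpace X (n + 1) ⊔
          Submodule.span F {z | ∃ x ∈ X, ∃ y ∈ growthSpace (F := F) X (n + 1), z = ⁅x, y⁆}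
          from rfl]
      haveI := ih
      have hset : {z | ∃ x ∈ X, ∃ y ∈ growthSpace (F := F) X (n + 1), z = ⁅x, y⁆} =
          ⋃ x ∈ X, (LieAlgebra.ad F L x) '' (growthSpace (F := F) X (n+1)) := by
        ext z
        simp only [Set.mem_setOf_eq, Set.mem_iUnion, Set.mem_image, SetLike.mem_coe,
          LieAlgebra.ad_apply]
        tauto
      have hspan : Submodule.span F {z | ∃ x ∈ X, ∃ y ∈ growthSpace (F := F) X (n + 1), z = ⁅x, y⁆}
          = ⨆ x ∈ X, Submodule.map (LieAlgebra.ad F L x) (growthSpace (F := F) X (n+1)) := by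
        rw [hset, Submodule.span_iUnion₂]
        refine iSup_congr fun x => iSup_congr fun _ => ?_
        rw [Submodule.span_image, Submodule.span_eq]
      rw [hspan]
      haveI : Finite X := hX
      rw [iSup_subtype']
      infer_instance

end GS

section Straighten
attribute [local instance 100] LieRing.ofAssociativeRing
variable {F : Type} [Field F] {L : Type} [LieRing L] [LieAlgebra F L]
variable {I : Type} [LinearOrder I]

/-- the monomial in `U(L)` attached to a list of indices -/
noncomputable def monUEA (b : I → L) (l : List I) : UniversalEnvelopingAlgebra F L :=
  (l.map (fun j => UniversalEnvelopingAlgebra.ι F (b j))).prod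

/-- total weight of a list of indices -/
def wtl (w : I → ℕ) (l : List I) : ℕ := (l.map w).sum

/-- span of sorted monomials of weight at most `m` -/
noncomputable def MM (w : I → ℕ) (b : I → L) (m : ℕ) :
    Submodule F (UniversalEnvelopingAlgebra F L) :=
  Submodule.span F {u | ∃ l : List I, l.Pairwise (· ≤ ·) ∧ wtl w l ≤ m ∧ u = monUEA b l}

lemma monUEA_append (b : I → L) (l1 l2 : List I) :
    monUEA (F := F) b (l1 ++ l2) = monUEA b l1 * monUEA b l2 := by
  simp [monUEA]

lemma monUEA_cons (b : I → L) (j : I) (l : List I) :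
    monUEA (F := F) b (j :: l) = UniversalEnvelopingAlgebra.ι F (b j) * monUEA b l := by
  simp [monUEA]

lemma wtl_append (w : I → ℕ) (l1 l2 : List I) : wtl w (l1 ++ l2) = wtl w l1 + wtl w l2 := by
  simp [wtl]

lemma wtl_cons (w : I → ℕ) (j : I) (l : List I) : wtl w (j :: l) = w j + wtl w l := by
  simp [wtl]

lemma MM_mono (w : I → ℕ) (b : I → L) {m m' : ℕ} (h : m ≤ m') :
    MM (F := F) w b m ≤ MM w b m' := by
  apply Submodule.span_mono
  rintro u ⟨l, hs, hw, rfl⟩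
  exact ⟨l, hs, hw.trans h, rfl⟩

/-- number of inversions -/
def invc : List I → ℕ
  | [] => 0
  | a :: l => l.countP (fun x => decide (x < a)) + invc l

lemma invc_swap (l2 : List I) {a c : I} (h : c < a) : ∀ l1 : List I,
    invc (l1 ++ c :: a :: l2) + 1 = invc (l1 ++ a :: c :: l2) := by
  intro l1
  induction l1 with
  | nil =>
    have h1 : (decide (c < a) : Bool) = true := by simp [h]
    have h2 : (decide (a < c) : Bool) = false := by simp [not_lt.mpr h.le]
    simp only [List.nil_append, invc, List.countP_cons, h1, h2]
    norm_num
    omega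
  | cons x l1 ih =>
    have hperm : (l1 ++ c :: a :: l2).Perm (l1 ++ a :: c :: l2) :=
      List.Perm.append_left l1 (List.Perm.swap a c l2)
    have e1 : invc ((x :: l1) ++ c :: a :: l2) =
        (l1 ++ c :: a :: l2).countP (fun y => decide (y < x)) + invc (l1 ++ c :: a :: l2) := rfl
    have e2 : invc ((x :: l1) ++ a :: c :: l2) =
        (l1 ++ a :: c :: l2).countP (fun y => decide (y < x)) + invc (l1 ++ a :: c :: l2) := rfl
    rw [e1, e2, hperm.countP_eq]
    omega

lemma exists_desc : ∀ {l : List I}, ¬ l.Pairwise (· ≤ ·) →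
    ∃ l1 a c l2, l = l1 ++ a :: c :: l2 ∧ c < a := by
  intro l
  induction l with
  | nil => intro h; exact absurd List.Pairwise.nil h
  | cons a l ih =>
    intro h
    cases l with
    | nil => exact absurd (List.pairwise_singleton _ a) h
    | cons c t =>
      by_cases hac : a ≤ c
      · have hns : ¬ (c :: t).Pairwise (· ≤ ·) := by
          intro hs
          apply h
          rw [List.pairwise_cons]
          refine ⟨?_, hs⟩
          intro x hx
          rcases List.mem_cons.mp hx with rfl | hx
          · exact hac
          · exact hac.trans ((List.pairwise_cons.mp hs).1 x hx)
        obtain ⟨l1, a', c', l2, heq, hlt⟩ := ih hns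
        exact ⟨a :: l1, a', c', l2, by rw [heq]; rfl, hlt⟩
      · exact ⟨[], a, c, t, rfl, lt_of_not_ge hac⟩

variable (w : I → ℕ) (b : I → L)

lemma straighten
    (Hcomm : ∀ j k : I, ⁅b j, b k⁆ ∈ Submodule.span F (b '' {r : I | w r ≤ w j + w k})) :
    ∀ (N k : ℕ) (l : List I), l.length ≤ N → invc l ≤ k →
      monUEA (F := F) b l ∈ MM w b (wtl w l) := by
  intro N
  induction N with
  | zero =>
    intro k l hlen _
    rw [List.length_eq_zero_iff.mp (Nat.le_zero.mp hlen)]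
    exact Submodule.subset_span ⟨[], List.Pairwise.nil, le_rfl, rfl⟩
  | succ N ihN =>
    intro k
    induction k with
    | zero =>
      intro l hlen hinv
      by_cases hs : l.Pairwise (· ≤ ·)
      · exact Submodule.subset_span ⟨l, hs, le_rfl, rfl⟩
      · obtain ⟨l1, a, c, l2, rfl, hlt⟩ := exists_desc hs
        have := invc_swap l2 hlt l1
        omega
    | succ k ihk =>
      intro l hlen hinv
      by_cases hs : l.Pairwise (· ≤ ·)
      · exact Submodule.subset_span ⟨l, hs, le_rfl, rfl⟩
      · obtain ⟨l1, a, c, l2, rfl, hlt⟩ := exists_desc hs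
        -- the swapped list
        set l' : List I := l1 ++ c :: a :: l2 with hl'
        have hwt : wtl w (l1 ++ a :: c :: l2) = wtl w l' := by
          simp [wtl, hl']; ring
        have hlen' : l'.length ≤ N + 1 := by
          simp only [hl', List.length_append, List.length_cons] at hlen ⊢; omega
        have hinv' : invc l' ≤ k := by
          have h9 := invc_swap l2 hlt l1
          rw [← hl'] at h9
          omega
        have hterm1 : monUEA (F := F) b l' ∈ MM w b (wtl w (l1 ++ a :: c :: l2)) := by
          rw [hwt]; exact ihk l' hlen' hinv'
        -- the commutator term
        set T : L →ₗ[F] UniversalEnvelopingAlgebra F L :=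
          (LinearMap.mulLeft F (monUEA (F := F) b l1)).comp
            ((LinearMap.mulRight F (monUEA (F := F) b l2)).comp
              (UniversalEnvelopingAlgebra.ι F).toLinearMap) with hT
        have hTapp : ∀ v : L, T v = monUEA (F := F) b l1 *
            (UniversalEnvelopingAlgebra.ι F v * monUEA (F := F) b l2) := by
          intro v; simp [hT, mul_assoc]
        have hterm2 : T ⁅b a, b c⁆ ∈ MM (F := F) w b (wtl w (l1 ++ a :: c :: l2)) := by
          have hv := Hcomm a c
          have himg := Submodule.apply_mem_span_image_of_mem_span T hv
          refine Submodule.span_le.mpr ?_ himg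
          rintro u ⟨v, ⟨r, hr, rfl⟩, rfl⟩
          rw [hTapp]
          have heqmon : monUEA (F := F) b l1 *
              (UniversalEnvelopingAlgebra.ι F (b r) * monUEA (F := F) b l2) =
              monUEA (F := F) b (l1 ++ r :: l2) := by
            rw [monUEA_append, monUEA_cons]
          rw [heqmon]
          have hlen'' : (l1 ++ r :: l2).length ≤ N := by
            simp only [List.length_append, List.length_cons] at hlen ⊢; omega
          have hmem := ihN (invc (l1 ++ r :: l2)) (l1 ++ r :: l2) hlen'' le_rfl
          refine MM_mono w b ?_ hmem
          simp only [wtl_append, wtl_cons]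
          have : w r ≤ w a + w c := hr
          omega
        have hiden : monUEA (F := F) b (l1 ++ a :: c :: l2) =
            monUEA (F := F) b l' + T ⁅b a, b c⁆ := by
          rw [hTapp]
          simp only [hl', monUEA_append, monUEA_cons]
          rw [LieHom.map_lie]
          rw [Ring.lie_def]
          noncomm_ring
        rw [hiden]
        exact add_mem hterm1 hterm2

end Straighten

section Spanning
attribute [local instance 100] LieRing.ofAssociativeRing
variable (F : Type) [Field F] {L : Type} [LieRing L] [LieAlgebra F L] (X : Set L)

/-- dimension of the n-th growth space -/
noncomputable def dd (n : ℕ) : ℕ := Module.finrank F ↥(growthSpace (F := F) X n)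

/-- linear order on the index type -/
noncomputable instance sigmaLO : LinearOrder (Σ n : ℕ, Fin (dd F X n)) :=
  LinearOrder.lift' (fun j => toLex ((j.1 : ℕ), (j.2 : ℕ))) (by
    rintro ⟨n, i⟩ ⟨n', i'⟩ h
    have h' : ((n, (i : ℕ)) : ℕ × ℕ) = (n', (i' : ℕ)) := toLex.injective h
    rw [Prod.mk.injEq] at h'
    obtain ⟨h1, h2⟩ := h'
    subst h1
    have h3 : i = i' := Fin.ext h2
    rw [h3])

variable (hX : X.Finite)

/-- basis vectors adapted to the growth filtration -/
noncomputable def bb (j : Σ n : ℕ, Fin (dd F X n)) : L :=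
  haveI := growthSpace_fd (F := F) X hX j.1
  ((Module.finBasis F ↥(growthSpace (F := F) X j.1)) j.2 : L)

lemma bb_mem (j : Σ n : ℕ, Fin (dd F X n)) : bb F X hX j ∈ growthSpace (F := F) X j.1 := by
  haveI := growthSpace_fd (F := F) X hX j.1
  exact ((Module.finBasis F ↥(growthSpace (F := F) X j.1)) j.2).2

lemma span_bb (n : ℕ) :
    Submodule.span F (Set.range fun i : Fin (dd F X n) => bb F X hX ⟨n, i⟩) =
      growthSpace (F := F) X n := by
  haveI := growthSpace_fd (F := F) X hX n
  have h1 : (Set.range fun i : Fin (dd F X n) => bb F X hX ⟨n, i⟩) =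
      (growthSpace (F := F) X n).subtype ''
        (Set.range (Module.finBasis F ↥(growthSpace (F := F) X n))) := by
    rw [← Set.range_comp]; rfl
  rw [h1, Submodule.span_image, Module.Basis.span_eq, Submodule.map_top, Submodule.range_subtype]

lemma bb_comm (j k : Σ n : ℕ, Fin (dd F X n)) :
    ⁅bb F X hX j, bb F X hX k⁆ ∈
      Submodule.span F (bb F X hX '' {r : Σ n : ℕ, Fin (dd F X n) | r.1 ≤ j.1 + k.1}) := by
  have h1 : ⁅bb F X hX j, bb F X hX k⁆ ∈ growthSpace (F := F) X (j.1 + k.1) :=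
    lie_mem_growthSpace X j.1 (bb_mem F X hX j) (bb_mem F X hX k)
  rw [← span_bb F X hX (j.1 + k.1)] at h1
  refine Submodule.span_mono ?_ h1
  rintro z ⟨i, rfl⟩
  exact ⟨⟨j.1 + k.1, i⟩, by simp, rfl⟩

lemma uea_le_MM (m : ℕ) :
    ueaFiltration (F := F) X m ≤ MM Sigma.fst (bb F X hX) m := by
  induction m with
  | zero =>
    rw [show ueaFiltration (F := F) X 0 = Submodule.span F {1} from rfl]
    rw [Submodule.span_le]
    rintro z rfl
    exact Submodule.subset_span ⟨[], List.Pairwise.nil, by simp [wtl], by simp [monUEA]⟩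
  | succ m ih =>
    rw [show ueaFiltration (F := F) X (m+1) = ueaFiltration X m ⊔
        Submodule.span F {z | ∃ x ∈ X, ∃ w ∈ ueaFiltration (F := F) X m,
          z = UniversalEnvelopingAlgebra.ι F x * w} from rfl]
    refine sup_le (ih.trans (MM_mono _ _ (Nat.le_succ m))) ?_
    rw [Submodule.span_le]
    rintro z ⟨x, hx, u, hu, rfl⟩
    have hu' : u ∈ MM Sigma.fst (bb F X hX) m := ih hu
    have himg := Submodule.apply_mem_span_image_of_mem_span
      (LinearMap.mulLeft F (UniversalEnvelopingAlgebra.ι F x)) hu'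
    have : UniversalEnvelopingAlgebra.ι F x * u =
        LinearMap.mulLeft F (UniversalEnvelopingAlgebra.ι F x) u := rfl
    rw [this]
    refine Submodule.span_le.mpr ?_ himg
    rintro v ⟨u', ⟨l, hsort, hwt, rfl⟩, rfl⟩
    -- now handle ι x * monUEA l  via  x ∈ V 1
    have hx1 : x ∈ growthSpace (F := F) X 1 := Submodule.subset_span hx
    rw [← span_bb F X hX 1] at hx1
    set T : L →ₗ[F] UniversalEnvelopingAlgebra F L :=
      (LinearMap.mulRight F (monUEA (F := F) (bb F X hX) l)).comp
        (UniversalEnvelopingAlgebra.ι F).toLinearMap with hT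
    have himg2 := Submodule.apply_mem_span_image_of_mem_span T hx1
    have heq : LinearMap.mulLeft F (UniversalEnvelopingAlgebra.ι F x)
        (monUEA (F := F) (bb F X hX) l) = T x := rfl
    rw [heq]
    refine Submodule.span_le.mpr ?_ himg2
    rintro v' ⟨_, ⟨i, rfl⟩, rfl⟩
    have heq2 : T (bb F X hX ⟨1, i⟩) = monUEA (F := F) (bb F X hX) (⟨1, i⟩ :: l) := by
      simp [hT, monUEA_cons]
    rw [heq2]
    have := straighten Sigma.fst (bb F X hX) (bb_comm F X hX)
      (⟨1, i⟩ :: l).length (invc (⟨1, i⟩ :: l)) (⟨1, i⟩ :: l) le_rfl le_rfl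
    refine MM_mono _ _ ?_ this
    rw [wtl_cons]
    show 1 + wtl Sigma.fst l ≤ m + 1
    omega

end Spanning

section Counting
variable {d : ℕ → ℕ} [LinearOrder ((n : ℕ) × Fin (d n))]

lemma wt_pos (hd0 : d 0 = 0) (j : (n : ℕ) × Fin (d n)) : 1 ≤ j.1 := by
  rcases j with ⟨n, i⟩
  cases n with
  | zero => rw [hd0] at i; exact i.elim0
  | succ n => exact Nat.succ_le_succ (Nat.zero_le n)

lemma length_le_wtl (hd0 : d 0 = 0) (l : List ((n : ℕ) × Fin (d n))) :
    l.length ≤ wtl Sigma.fst l := by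
  induction l with
  | nil => simp [wtl]
  | cons j l ih =>
    rw [wtl_cons, List.length_cons]
    have := wt_pos hd0 j
    omega

lemma mem_wt_le {l : List ((n : ℕ) × Fin (d n))} {j} (hj : j ∈ l) : j.1 ≤ wtl Sigma.fst l := by
  induction l with
  | nil => simp at hj
  | cons a l ih =>
    rw [wtl_cons]
    rcases List.mem_cons.mp hj with rfl | hj
    · omega
    · have := ih hj; omega

/-- truncated count function -/
def PhiC (m : ℕ) (l : List ((n : ℕ) × Fin (d n))) :
    (n : Fin m) → Fin (d (n.1 + 1)) → Fin (m + 1) :=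
  fun n i => ⟨min (l.count ⟨n.1 + 1, i⟩) m, by omega⟩

lemma PhiC_injOn (hd0 : d 0 = 0) (m : ℕ) :
    Set.InjOn (PhiC (d := d) m)
      {l : List ((n : ℕ) × Fin (d n)) | l.Pairwise (· ≤ ·) ∧ wtl Sigma.fst l ≤ m} := by
  rintro l ⟨hs, hw⟩ l' ⟨hs', hw'⟩ heq
  have hcount : ∀ j, l.count j = l'.count j := by
    intro j
    rcases j with ⟨n, i⟩
    have hcl : ∀ (l'' : List ((n : ℕ) × Fin (d n))), wtl Sigma.fst l'' ≤ m →
        ∀ j', l''.count j' ≤ m := by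
      intro l'' hw'' j'
      exact List.count_le_length.trans ((length_le_wtl hd0 l'').trans hw'')
    cases n with
    | zero => rw [hd0] at i; exact i.elim0
    | succ n =>
      by_cases hn : n < m
      · have := congrFun (congrFun heq ⟨n, hn⟩) i
        have h1 := hcl l hw ⟨n + 1, i⟩
        have h2 := hcl l' hw' ⟨n + 1, i⟩
        simp only [PhiC, Fin.mk.injEq] at this
        omega
      · have h1 : (⟨n + 1, i⟩ : (n : ℕ) × Fin (d n)) ∉ l := by
          intro hmem; have := mem_wt_le hmem; simp at this; omega
        have h2 : (⟨n + 1, i⟩ : (n : ℕ) × Fin (d n)) ∉ l' := by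
          intro hmem; have := mem_wt_le hmem; simp at this; omega
        rw [List.count_eq_zero.mpr h1, List.count_eq_zero.mpr h2]
  exact List.Perm.eq_of_pairwise' hs hs' (List.perm_iff_count.mpr hcount)

lemma sum_count_wt_le (s : Finset ((n : ℕ) × Fin (d n))) (l : List ((n : ℕ) × Fin (d n))) :
    ∑ j ∈ s, j.1 * l.count j ≤ wtl Sigma.fst l := by
  induction l with
  | nil => simp [wtl]
  | cons a l ih =>
    rw [wtl_cons]
    have hc : ∀ j : (n : ℕ) × Fin (d n), (a :: l).count j = l.count j + if j = a then 1 else 0 := by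
      intro j
      by_cases h : j = a
      · subst h; simp [List.count_cons]
      · simp [List.count_cons, h, Ne.symm h]
    calc ∑ j ∈ s, j.1 * (a :: l).count j
        = ∑ j ∈ s, (j.1 * l.count j + j.1 * (if j = a then 1 else 0)) := by
          refine Finset.sum_congr rfl fun j _ => ?_
          rw [hc j, Nat.mul_add]
      _ = (∑ j ∈ s, j.1 * l.count j) + ∑ j ∈ s, j.1 * (if j = a then 1 else 0) := by
          rw [Finset.sum_add_distrib]
      _ ≤ wtl Sigma.fst l + a.1 := by
          refine Nat.add_le_add ih ?_
          have hite : ∀ j : (n : ℕ) × Fin (d n), j.1 * (if j = a then 1 else 0) =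
              if j = a then a.1 else 0 := by
            intro j; split <;> simp_all
          rw [Finset.sum_congr rfl fun j _ => hite j, Finset.sum_ite_eq' s a fun _ => a.1]
          split <;> omega
      _ = a.1 + wtl Sigma.fst l := by omega

/-- weight of a tuple of multiplicity functions -/
def wtQ (m : ℕ) (g : (n : Fin m) → Fin (d (n.1 + 1)) → Fin (m + 1)) : ℕ :=
  ∑ n : Fin m, (n.1 + 1) * ∑ i, (g n i : ℕ)

lemma wtQ_PhiC_le (m : ℕ) (l : List ((n : ℕ) × Fin (d n))) :
    wtQ m (PhiC m l) ≤ wtl Sigma.fst l := by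
  have step1 : wtQ m (PhiC m l) ≤ ∑ n : Fin m, ∑ i : Fin (d (n.1+1)),
      (n.1 + 1) * l.count ⟨n.1 + 1, i⟩ := by
    refine Finset.sum_le_sum fun n _ => ?_
    rw [Finset.mul_sum]
    refine Finset.sum_le_sum fun i _ => ?_
    exact Nat.mul_le_mul_left _ (by simp [PhiC])
  refine step1.trans ?_
  set e : ((n : Fin m) × Fin (d (n.1 + 1))) ↪ ((n : ℕ) × Fin (d n)) :=
    ⟨fun p => ⟨p.1.1 + 1, p.2⟩, by
      rintro ⟨n, i⟩ ⟨n', i'⟩ h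
      have h1 : n.1 + 1 = n'.1 + 1 := congrArg Sigma.fst h
      have hnn : n = n' := Fin.ext (Nat.succ_injective h1)
      subst hnn
      have h2 : (i : ℕ) = (i' : ℕ) :=
        congrArg (fun j : (k : ℕ) × Fin (d k) => (j.2 : ℕ)) h
      rw [Fin.ext h2]⟩ with he
  have step2 : ∑ n : Fin m, ∑ i : Fin (d (n.1+1)), (n.1 + 1) * l.count ⟨n.1 + 1, i⟩
      = ∑ j ∈ Finset.univ.map e, j.1 * l.count j := by
    rw [Finset.sum_map, ← Finset.univ_sigma_univ, Finset.sum_sigma]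
    rfl
  rw [step2]
  exact sum_count_wt_le _ l

lemma ncard_sorted_le (hd0 : d 0 = 0) (m : ℕ) {t : ℝ} (ht0 : 0 < t) (ht1 : t < 1) :
    (Set.ncard {l : List ((n : ℕ) × Fin (d n)) |
        l.Pairwise (· ≤ ·) ∧ wtl Sigma.fst l ≤ m} : ℝ) * t ^ m ≤
      ∏ n ∈ Finset.range m, ((1 - t ^ (n + 1))⁻¹) ^ (d (n + 1)) := by
  classical
  set Lset := {l : List ((n : ℕ) × Fin (d n)) | l.Pairwise (· ≤ ·) ∧ wtl Sigma.fst l ≤ m}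
    with hLset
  have hinj : Set.InjOn (PhiC (d := d) m) Lset := PhiC_injOn hd0 m
  have himgfin : (PhiC (d := d) m '' Lset).Finite := Set.toFinite _
  have hLfin : Lset.Finite := Set.Finite.of_finite_image himgfin hinj
  set LF : Finset (List ((n : ℕ) × Fin (d n))) := hLfin.toFinset with hLF
  set imgF : Finset ((n : Fin m) → Fin (d (n.1 + 1)) → Fin (m + 1)) :=
    LF.image (PhiC m) with himgF
  have hcard : imgF.card = LF.card := by
    rw [himgF]
    apply Finset.card_image_of_injOn
    rw [hLF, Set.Finite.coe_toFinset]
    exact hinj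
  have hncard : (Set.ncard Lset : ℝ) = (imgF.card : ℝ) := by
    rw [hcard, hLF, Set.ncard_eq_toFinset_card Lset hLfin]
  rw [hncard]
  have step1 : (imgF.card : ℝ) * t ^ m ≤ ∑ g ∈ imgF, t ^ (wtQ (d := d) m g) := by
    rw [show (imgF.card : ℝ) * t ^ m = ∑ _g ∈ imgF, t ^ m by
      rw [Finset.sum_const, nsmul_eq_mul]]
    refine Finset.sum_le_sum fun g hg => ?_
    obtain ⟨l, hl, rfl⟩ := Finset.mem_image.mp hg
    rw [hLF, Set.Finite.mem_toFinset] at hl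
    refine pow_le_pow_of_le_one ht0.le ht1.le ?_
    exact (wtQ_PhiC_le m l).trans hl.2
  have step2 : ∑ g ∈ imgF, t ^ (wtQ (d := d) m g) ≤
      ∑ g : (n : Fin m) → Fin (d (n.1 + 1)) → Fin (m + 1), t ^ (wtQ (d := d) m g) := by
    refine Finset.sum_le_sum_of_subset_of_nonneg (Finset.subset_univ _) ?_
    intro g _ _
    exact pow_nonneg ht0.le _
  have step3 : ∑ g : (n : Fin m) → Fin (d (n.1 + 1)) → Fin (m + 1), t ^ (wtQ (d := d) m g)
      = ∏ n : Fin m, ∑ h : Fin (d (n.1 + 1)) → Fin (m + 1), t ^ ((n.1 + 1) * ∑ i, (h i : ℕ)) := by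
    have key := Fintype.prod_sum (R := ℝ)
      (fun (n : Fin m) (h : Fin (d (n.1 + 1)) → Fin (m + 1)) => t ^ ((n.1 + 1) * ∑ i, (h i : ℕ)))
    rw [key]
    refine Finset.sum_congr rfl fun g _ => ?_
    rw [wtQ, ← Finset.prod_pow_eq_pow_sum]
  have step4 : ∀ n : Fin m, ∑ h : Fin (d (n.1 + 1)) → Fin (m + 1), t ^ ((n.1 + 1) * ∑ i, (h i : ℕ))
      = (∑ v : Fin (m + 1), (t ^ (n.1 + 1)) ^ (v : ℕ)) ^ (d (n.1 + 1)) := by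
    intro n
    have : ∀ h : Fin (d (n.1 + 1)) → Fin (m + 1), t ^ ((n.1 + 1) * ∑ i, (h i : ℕ))
        = ∏ i : Fin (d (n.1 + 1)), (t ^ (n.1 + 1)) ^ ((h i : ℕ)) := by
      intro h
      rw [Finset.mul_sum, ← Finset.prod_pow_eq_pow_sum]
      refine Finset.prod_congr rfl fun i _ => ?_
      rw [← pow_mul]
    rw [Finset.sum_congr rfl fun h _ => this h]
    have key2 := Fintype.prod_sum (R := ℝ)
      (fun (_i : Fin (d (n.1 + 1))) (v : Fin (m + 1)) => (t ^ (n.1 + 1)) ^ (v : ℕ))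
    rw [← key2, Finset.prod_const, Finset.card_univ, Fintype.card_fin]
  have step5 : ∏ n : Fin m, (∑ v : Fin (m + 1), (t ^ (n.1 + 1)) ^ (v : ℕ)) ^ (d (n.1 + 1)) ≤
      ∏ n : Fin m, ((1 - t ^ (n.1 + 1))⁻¹) ^ (d (n.1 + 1)) := by
    refine Finset.prod_le_prod (fun n _ => ?_) (fun n _ => ?_)
    · exact pow_nonneg (Finset.sum_nonneg fun v _ => pow_nonneg (pow_nonneg ht0.le _) _) _
    · refine pow_le_pow_left₀ (Finset.sum_nonneg fun v _ => pow_nonneg (pow_nonneg ht0.le _) _) ?_ _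
      have hx0 : (0:ℝ) ≤ t ^ (n.1 + 1) := pow_nonneg ht0.le _
      have hx1 : t ^ (n.1 + 1) < 1 := pow_lt_one₀ ht0.le ht1 (Nat.succ_ne_zero _)
      rw [Fin.sum_univ_eq_sum_range (fun v => (t ^ (n.1 + 1)) ^ v) (m + 1)]
      exact (Summable.sum_le_tsum _ (fun i _ => pow_nonneg hx0 i)
        (summable_geometric_of_lt_one hx0 hx1)).trans_eq
        (tsum_geometric_of_lt_one hx0 hx1)
  have step6 : ∏ n : Fin m, ((1 - t ^ (n.1 + 1))⁻¹) ^ (d (n.1 + 1)) =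
      ∏ n ∈ Finset.range m, ((1 - t ^ (n + 1))⁻¹) ^ (d (n + 1)) :=
    Fin.prod_univ_eq_prod_range (fun n => ((1 - t ^ (n + 1))⁻¹) ^ (d (n + 1))) m
  calc (imgF.card : ℝ) * t ^ m ≤ ∑ g ∈ imgF, t ^ (wtQ (d := d) m g) := step1
    _ ≤ ∑ g : (n : Fin m) → Fin (d (n.1 + 1)) → Fin (m + 1), t ^ (wtQ (d := d) m g) := step2
    _ = ∏ n : Fin m, ∑ h : Fin (d (n.1 + 1)) → Fin (m + 1),
          t ^ ((n.1 + 1) * ∑ i, (h i : ℕ)) := step3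
    _ = ∏ n : Fin m, (∑ v : Fin (m + 1), (t ^ (n.1 + 1)) ^ (v : ℕ)) ^ (d (n.1 + 1)) :=
          Finset.prod_congr rfl fun n _ => step4 n
    _ ≤ ∏ n : Fin m, ((1 - t ^ (n.1 + 1))⁻¹) ^ (d (n.1 + 1)) := step5
    _ = ∏ n ∈ Finset.range m, ((1 - t ^ (n + 1))⁻¹) ^ (d (n + 1)) := step6
end Counting

section Final
variable {F : Type} [Field F] {L : Type} [LieRing L] [LieAlgebra F L]

lemma dd_zero (X : Set L) : dd F X 0 = 0 := by
  rw [dd, show growthSpace (F := F) X 0 = ⊥ from rfl, finrank_bot]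

lemma finrank_uea_le_ncard (X : Set L) (hX : X.Finite) (m : ℕ) :
    (Module.finrank F ↥(ueaFiltration (F := F) X m) : ℝ) ≤
      (Set.ncard {l : List ((n : ℕ) × Fin (dd F X n)) |
        l.Pairwise (· ≤ ·) ∧ wtl Sigma.fst l ≤ m} : ℝ) := by
  classical
  have hle : ueaFiltration (F := F) X m ≤ MM Sigma.fst (bb F X hX) m := uea_le_MM F X hX m
  set Lset := {l : List ((n : ℕ) × Fin (dd F X n)) | l.Pairwise (· ≤ ·) ∧ wtl Sigma.fst l ≤ m}
    with hLset
  have hLfin : Lset.Finite :=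
    Set.Finite.of_finite_image (Set.toFinite _) (PhiC_injOn (dd_zero X) m)
  have hMMeq : MM Sigma.fst (bb F X hX) m =
      Submodule.span F ↑(hLfin.toFinset.image (monUEA (F := F) (bb F X hX))) := by
    rw [MM]
    congr 1
    ext u
    constructor
    · rintro ⟨l, hs, hw, rfl⟩
      simp only [Finset.coe_image, Set.mem_image, Finset.mem_coe]
      exact ⟨l, by rw [Set.Finite.mem_toFinset]; exact ⟨hs, hw⟩, rfl⟩
    · rintro hu
      simp only [Finset.coe_image, Set.mem_image, Finset.mem_coe] at hu
      obtain ⟨l, hl, rfl⟩ := hu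
      rw [Set.Finite.mem_toFinset] at hl
      exact ⟨l, hl.1, hl.2, rfl⟩
  haveI : FiniteDimensional F ↥(MM (F := F) Sigma.fst (bb F X hX) m) := by
    rw [hMMeq]
    exact FiniteDimensional.span_of_finite F (Finset.finite_toSet _)
  have h1 : Module.finrank F ↥(ueaFiltration (F := F) X m) ≤
      Module.finrank F ↥(MM (F := F) Sigma.fst (bb F X hX) m) :=
    Submodule.finrank_mono hle
  have h2 : Module.finrank F ↥(MM (F := F) Sigma.fst (bb F X hX) m) ≤
      (hLfin.toFinset.image (monUEA (F := F) (bb F X hX))).card := by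
    rw [hMMeq]
    exact finrank_span_finset_le_card _
  have h3 : (hLfin.toFinset.image (monUEA (F := F) (bb F X hX))).card ≤ hLfin.toFinset.card :=
    Finset.card_image_le
  have h4 : hLfin.toFinset.card = Set.ncard Lset := (Set.ncard_eq_toFinset_card Lset hLfin).symm
  exact_mod_cast (h1.trans h2).trans (h3.trans_eq h4)

end Final

/-- Smith's theorem: if a finitely generated Lie algebra `L` over a field of
characteristic `0` has subexponential growth, then the universal enveloping algebra `U(L)` has
subexponential growth: `dim W_m` grows subexponentially in `m`, where `W_m` is the span of
products of at most `m` generators. -/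
theorem uea_subexponential_growth (F : Type) [Field F] [CharZero F] (L : Type) [LieRing L]
    [LieAlgebra F L] (X : Set L) (hXfin : X.Finite)
    (hgen : (⨆ n : ℕ, growthSpace (F := F) X n) = ⊤)
    (hsub : ∀ C : ℝ, 1 < C →
      Tendsto (fun n => (Module.finrank F (growthSpace (F := F) X n) : ℝ) / C ^ n)
        atTop (nhds 0)) :
    ∀ C : ℝ, 1 < C →
      Tendsto (fun m => (Module.finrank F (ueaFiltration (F := F) X m) : ℝ) / C ^ m)
        atTop (nhds 0) := by
  intro C hC
  have hC0 : (0:ℝ) < C := lt_trans one_pos hC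
  set t : ℝ := (C + 1) / (2 * C) with hts
  have ht0 : 0 < t := div_pos (by linarith) (by linarith)
  have ht1 : t < 1 := by rw [hts, div_lt_one (by linarith)]; linarith
  have htC : 1 < t * C := by
    rw [hts, div_mul_eq_mul_div, mul_comm (2:ℝ) C, ← div_div,
      mul_div_assoc, div_self (ne_of_gt hC0), mul_one]
    linarith
  set C₀ : ℝ := (t + 1) / (2 * t) with hC₀s
  have hC₀1 : 1 < C₀ := by rw [hC₀s, lt_div_iff₀ (by linarith)]; linarith
  have hC₀0 : 0 < C₀ := lt_trans one_pos hC₀1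
  set u : ℝ := C₀ * t with hus
  have hu0 : 0 < u := mul_pos hC₀0 ht0
  have hu1 : u < 1 := by
    rw [hus, hC₀s, div_mul_eq_mul_div, mul_comm (2:ℝ) t, ← div_div,
      mul_div_assoc, div_self (ne_of_gt ht0), mul_one]
    linarith
  -- bound on dimensions of the growth spaces
  obtain ⟨M, hM⟩ := (hsub C₀ hC₀1).bddAbove_range
  rw [mem_upperBounds] at hM
  have hMn : ∀ n : ℕ, (Module.finrank F (growthSpace (F := F) X n) : ℝ) ≤ M * C₀ ^ n := by
    intro n
    have h := hM _ (Set.mem_range_self n)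
    rwa [div_le_iff₀ (pow_pos hC₀0 n)] at h
  have hM0 : 0 ≤ M := by
    have h := hM _ (Set.mem_range_self 0)
    have h0 : (0:ℝ) ≤ (Module.finrank F (growthSpace (F := F) X 0) : ℝ) / C₀ ^ 0 :=
      div_nonneg (Nat.cast_nonneg _) (pow_nonneg hC₀0.le 0)
    linarith
  set K : ℝ := Real.exp (M * (1 - u)⁻¹ * (1 - t)⁻¹) with hK
  -- the key uniform bound
  have key : ∀ m : ℕ, (Module.finrank F (ueaFiltration (F := F) X m) : ℝ) * t ^ m ≤ K := by
    intro m
    have hA := finrank_uea_le_ncard (F := F) X hXfin m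
    have hB := ncard_sorted_le (d := dd F X) (dd_zero (F := F) X) m ht0 ht1
    have hstep : (Module.finrank F (ueaFiltration (F := F) X m) : ℝ) * t ^ m ≤
        ∏ n ∈ Finset.range m, ((1 - t ^ (n + 1))⁻¹) ^ (dd F X (n + 1)) :=
      le_trans (mul_le_mul_of_nonneg_right hA (pow_nonneg ht0.le m)) hB
    refine hstep.trans ?_
    -- bound each factor by an exponential
    have hfac : ∀ n : ℕ, ((1 - t ^ (n + 1))⁻¹) ^ (dd F X (n + 1)) ≤
        Real.exp ((dd F X (n + 1) : ℝ) * (t ^ (n + 1) * (1 - t)⁻¹)) := by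
      intro n
      set x : ℝ := t ^ (n + 1) with hx
      have hx0 : 0 < x := pow_pos ht0 _
      have hxt : x ≤ t := by
        rw [hx]
        calc t ^ (n + 1) ≤ t ^ 1 := pow_le_pow_of_le_one ht0.le ht1.le (by omega)
          _ = t := pow_one t
      have hx1 : x < 1 := lt_of_le_of_lt hxt ht1
      have h1x : 0 < 1 - x := by linarith
      have h1t : 0 < 1 - t := by linarith
      have hlog : Real.log ((1 - x)⁻¹) ≤ x * (1 - t)⁻¹ := by
        have := Real.log_le_sub_one_of_pos (inv_pos.mpr h1x)
        have heq : (1 - x)⁻¹ - 1 = x * (1 - x)⁻¹ := by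
          have hne : (1 - x) ≠ 0 := h1x.ne'
          rw [eq_comm, ← div_eq_mul_inv, div_eq_iff hne, sub_mul, inv_mul_cancel₀ hne, one_mul]
          ring
        rw [heq] at this
        refine this.trans ?_
        have : (1 - x)⁻¹ ≤ (1 - t)⁻¹ := by
          apply inv_anti₀ h1t
          linarith
        exact mul_le_mul_of_nonneg_left this hx0.le
      have hinv : (1 - x)⁻¹ ≤ Real.exp (x * (1 - t)⁻¹) := by
        calc (1 - x)⁻¹ = Real.exp (Real.log ((1 - x)⁻¹)) :=
              (Real.exp_log (inv_pos.mpr h1x)).symm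
          _ ≤ Real.exp (x * (1 - t)⁻¹) := Real.exp_le_exp.mpr hlog
      calc ((1 - x)⁻¹) ^ (dd F X (n + 1)) ≤ (Real.exp (x * (1 - t)⁻¹)) ^ (dd F X (n + 1)) :=
            pow_le_pow_left₀ (inv_pos.mpr h1x).le hinv _
        _ = Real.exp ((dd F X (n + 1) : ℝ) * (x * (1 - t)⁻¹)) := by
            rw [← Real.exp_nat_mul]
    have hprod : ∏ n ∈ Finset.range m, ((1 - t ^ (n + 1))⁻¹) ^ (dd F X (n + 1)) ≤
        Real.exp (∑ n ∈ Finset.range m, (dd F X (n + 1) : ℝ) * (t ^ (n + 1) * (1 - t)⁻¹)) := by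
      rw [Real.exp_sum]
      refine Finset.prod_le_prod (fun n _ => ?_) (fun n _ => hfac n)
      have h1x : 0 < 1 - t ^ (n + 1) := by
        have : t ^ (n + 1) < 1 := pow_lt_one₀ ht0.le ht1 (Nat.succ_ne_zero _)
        linarith
      exact pow_nonneg (inv_pos.mpr h1x).le _
    refine hprod.trans ?_
    rw [hK, Real.exp_le_exp]
    -- the sum bound
    have hsum : ∑ n ∈ Finset.range m, (dd F X (n + 1) : ℝ) * (t ^ (n + 1) * (1 - t)⁻¹) =
        (∑ n ∈ Finset.range m, (dd F X (n + 1) : ℝ) * t ^ (n + 1)) * (1 - t)⁻¹ := by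
      rw [Finset.sum_mul]
      refine Finset.sum_congr rfl fun n _ => ?_
      ring
    rw [hsum]
    have hsum2 : ∑ n ∈ Finset.range m, (dd F X (n + 1) : ℝ) * t ^ (n + 1) ≤ M * (1 - u)⁻¹ := by
      have hterm : ∀ n ∈ Finset.range m, (dd F X (n + 1) : ℝ) * t ^ (n + 1) ≤ M * u ^ n := by
        intro n _
        have hMn' : (dd F X (n + 1) : ℝ) ≤ M * C₀ ^ (n + 1) := hMn (n + 1)
        have h1 : (dd F X (n + 1) : ℝ) * t ^ (n + 1) ≤ (M * C₀ ^ (n + 1)) * t ^ (n + 1) :=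
          mul_le_mul_of_nonneg_right hMn' (pow_nonneg ht0.le _)
        have h2 : (M * C₀ ^ (n + 1)) * t ^ (n + 1) = M * u ^ (n + 1) := by
          rw [hus, mul_pow]
          ring
        have h3 : M * u ^ (n + 1) ≤ M * u ^ n := by
          refine mul_le_mul_of_nonneg_left ?_ hM0
          calc u ^ (n + 1) = u ^ n * u := by ring
            _ ≤ u ^ n * 1 := mul_le_mul_of_nonneg_left hu1.le (pow_nonneg hu0.le n)
            _ = u ^ n := mul_one _
        linarith
      calc ∑ n ∈ Finset.range m, (dd F X (n + 1) : ℝ) * t ^ (n + 1)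
          ≤ ∑ n ∈ Finset.range m, M * u ^ n := Finset.sum_le_sum hterm
        _ = M * ∑ n ∈ Finset.range m, u ^ n := by rw [Finset.mul_sum]
        _ ≤ M * (1 - u)⁻¹ := by
            refine mul_le_mul_of_nonneg_left ?_ hM0
            exact (Summable.sum_le_tsum _ (fun i _ => pow_nonneg hu0.le i)
              (summable_geometric_of_lt_one hu0.le hu1)).trans_eq
              (tsum_geometric_of_lt_one hu0.le hu1)
    have h1t : (0:ℝ) ≤ (1 - t)⁻¹ := inv_nonneg.mpr (by linarith)
    calc (∑ n ∈ Finset.range m, (dd F X (n + 1) : ℝ) * t ^ (n + 1)) * (1 - t)⁻¹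
        ≤ (M * (1 - u)⁻¹) * (1 - t)⁻¹ := mul_le_mul_of_nonneg_right hsum2 h1t
      _ = M * (1 - u)⁻¹ * (1 - t)⁻¹ := by ring
  -- conclude
  have hbound : ∀ m : ℕ, (Module.finrank F (ueaFiltration (F := F) X m) : ℝ) / C ^ m ≤
      K * ((t * C)⁻¹) ^ m := by
    intro m
    have h1 : (0:ℝ) < t ^ m := pow_pos ht0 m
    have h2 : (0:ℝ) < C ^ m := pow_pos hC0 m
    rw [div_le_iff₀ h2]
    have h3 : (Module.finrank F (ueaFiltration (F := F) X m) : ℝ) ≤ K * (t ^ m)⁻¹ := by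
      have := (le_div_iff₀ h1).mpr (key m)
      rwa [div_eq_mul_inv] at this
    have h4 : ((t * C)⁻¹) ^ m * C ^ m = (t ^ m)⁻¹ := by
      rw [mul_inv, mul_pow, inv_pow, inv_pow, mul_assoc,
        inv_mul_cancel₀ (ne_of_gt h2), mul_one]
    rw [mul_assoc, h4]
    exact h3
  refine squeeze_zero (fun m => div_nonneg (Nat.cast_nonneg _) (pow_nonneg hC0.le m)) hbound ?_
  have hr0 : (0:ℝ) ≤ (t * C)⁻¹ := inv_nonneg.mpr (le_of_lt (mul_pos ht0 hC0))
  have hr1 : (t * C)⁻¹ < 1 := inv_lt_one_of_one_lt₀ htC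
  simpa using (tendsto_pow_atTop_nhds_zero_of_lt_one hr0 hr1).const_mul K
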